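/- For a series system φ(x) = x_1···x_n with independent binary components, if p_i ≤ p_j then the mutual information importances satisfy I(X_i; X) ≥ I(X_j; X), where X = X_1···X_n. -/

import Mathlib

open MeasureTheory ProbabilityTheory

def Coherent {n : ℕ} (φ : (Fin n → Bool) → Bool) : Prop :=
  Monotone φ ∧ ∀ i : Fin n, ∃ x, φ (Function.update x i true) ≠ φ (Function.update x i false)

/-- `-(x * log₂ x)`, with the convention `0 · log 0 = 0`. -/
noncomputable def ent (x : ℝ) : ℝ := -(x * Real.logb 2 x)

/-- Mutual information (base 2) of two binary random variables,
`I(U;V) = H(U) + H(V) - H(U,V)`. -/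
noncomputable def mi {Ω : Type*} [MeasurableSpace Ω] (μ : Measure Ω)
    (U V : Ω → Bool) : ℝ :=
  (∑ a : Bool, ent (μ {ω | U ω = a}).toReal) +
    (∑ b : Bool, ent (μ {ω | V ω = b}).toReal) -
    ∑ a : Bool, ∑ b : Bool, ent (μ {ω | U ω = a ∧ V ω = b}).toReal

lemma ent_key {c p q : ℝ} (hc : 0 ≤ c) (hcp : c ≤ p) (hpq : p ≤ q) :
    ent q - ent (q - c) ≤ ent p - ent (p - c) := by
  rcases eq_or_lt_of_le hc with rfl | hc
  · simp
  rcases eq_or_lt_of_le hpq with rfl | hpq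
  · simp
  set g : ℝ → ℝ := fun x => x * Real.log x with hg
  have hp0 : (0:ℝ) ≤ p - c := by linarith
  have hq0 : (0:ℝ) ≤ q - c := by linarith
  have hpI : p ∈ Set.Ici (0:ℝ) := by simp [Set.mem_Ici]; linarith
  have hqI : q ∈ Set.Ici (0:ℝ) := by simp [Set.mem_Ici]; linarith
  have hpcI : p - c ∈ Set.Ici (0:ℝ) := hp0
  have hqcI : q - c ∈ Set.Ici (0:ℝ) := hq0
  have h1 := Real.convexOn_mul_log.secant_mono hpcI hpI hqI
    (by intro h; nlinarith) (by intro h; nlinarith) hpq.le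
  have h2 := Real.convexOn_mul_log.secant_mono hqI hpcI hqcI
    (by intro h; nlinarith) (by intro h; nlinarith) (by linarith)
  have hd : (0:ℝ) < q - (p - c) := by linarith
  have e1 : (g (p - c) - g q) / (p - c - q) = (g q - g (p - c)) / (q - (p - c)) := by
    rw [show p - c - q = -(q - (p - c)) by ring, show g (p-c) - g q = -(g q - g (p-c)) by ring,
      neg_div_neg_eq]
  have e2 : (g (q - c) - g q) / (q - c - q) = (g q - g (q - c)) / c := by
    rw [show q - c - q = -c by ring, show g (q-c) - g q = -(g q - g (q-c)) by ring,
      neg_div_neg_eq]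
  rw [e1, e2] at h2
  have h1' : (g p - g (p - c)) / (p - (p - c)) = (g p - g (p - c)) / c := by ring_nf
  rw [h1'] at h1
  have hgle : g p - g (p - c) ≤ g q - g (q - c) := by
    have := h1.trans h2
    rwa [div_le_div_iff_of_pos_right hc] at this
  have hlog2 : (0:ℝ) < Real.log 2 := Real.log_pos one_lt_two
  have expand : ∀ x : ℝ, ent x = -(g x) / Real.log 2 := by
    intro x; simp [ent, Real.logb, hg]; ring
  rw [expand, expand, expand, expand]
  rw [div_sub_div_same, div_sub_div_same, div_le_div_iff_of_pos_right hlog2]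
  linarith

lemma mi_eq {Ω : Type*} [MeasurableSpace Ω] (μ : Measure Ω) [IsProbabilityMeasure μ]
    (U V : Ω → Bool) (hU : MeasurableSet {ω | U ω = true})
    (hV : MeasurableSet {ω | V ω = true})
    (hsub : {ω | V ω = true} ⊆ {ω | U ω = true}) :
    mi μ U V = ent (μ {ω | U ω = true}).toReal
      + ent (1 - (μ {ω | V ω = true}).toReal)
      - ent ((μ {ω | U ω = true}).toReal - (μ {ω | V ω = true}).toReal) := by
  set A := {ω | U ω = true} with hA
  set S := {ω | V ω = true} with hS
  have eUf : {ω | U ω = false} = Aᶜ := by ext ω; simp [hA]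
  have eVf : {ω | V ω = false} = Sᶜ := by ext ω; simp [hS]
  have eff : {ω | U ω = false ∧ V ω = false} = Aᶜ := by
    ext ω; simp only [Set.mem_setOf_eq, Set.mem_compl_iff, hA, Set.mem_setOf_eq]
    constructor
    · rintro ⟨h, _⟩; simp [h]
    · intro h
      have h' : U ω = false := by simpa using h
      refine ⟨h', ?_⟩
      have : ω ∉ S := fun hw => h (hsub hw)
      simpa [hS] using this
  have eft : {ω | U ω = false ∧ V ω = true} = (∅ : Set Ω) := by
    ext ω; simp only [Set.mem_setOf_eq, Set.mem_empty_iff_false, iff_false]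
    rintro ⟨h1, h2⟩
    have := hsub h2; rw [hA] at this; simp_all
  have etf : {ω | U ω = true ∧ V ω = false} = A \ S := by
    ext ω; simp [hA, hS, Set.mem_diff]
  have ett : {ω | U ω = true ∧ V ω = true} = S := by
    ext ω
    simp only [Set.mem_setOf_eq, hS]
    exact ⟨fun h => h.2, fun h => ⟨hsub h, h⟩⟩
  have hμA : μ A ≠ ⊤ := measure_ne_top μ A
  have hμS : μ S ≠ ⊤ := measure_ne_top μ S
  have hcompl : ∀ (T : Set Ω), MeasurableSet T → (μ Tᶜ).toReal = 1 - (μ T).toReal := by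
    intro T hT
    rw [measure_compl hT (measure_ne_top μ T), measure_univ,
      ENNReal.toReal_sub_of_le prob_le_one ENNReal.one_ne_top, ENNReal.toReal_one]
  have hdiff : (μ (A \ S)).toReal = (μ A).toReal - (μ S).toReal := by
    rw [measure_diff hsub hV.nullMeasurableSet hμS,
      ENNReal.toReal_sub_of_le (measure_mono hsub) hμA]
  have hent0 : ent 0 = 0 := by simp [ent]
  simp only [mi, Fintype.sum_bool, eUf, eVf, eff, eft, etf, ett, hdiff,
    hcompl A hU, hcompl S hV, measure_empty, ENNReal.toReal_zero, hent0]
  ring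

/-- In a series system, less reliable components have larger information importance. -/
theorem stmt16 {Ω : Type*} [MeasurableSpace Ω] (μ : Measure Ω) [IsProbabilityMeasure μ]
    {n : ℕ} (X : Fin n → Ω → Bool) (hmeas : ∀ k, Measurable (X k))
    (hindep : iIndepFun X μ)
    (i j : Fin n) (hij : μ {ω | X i ω = true} ≤ μ {ω | X j ω = true}) :
    mi μ (X j) (fun ω => decide (∀ k, X k ω = true)) ≤
      mi μ (X i) (fun ω => decide (∀ k, X k ω = true)) := by
  set D : Ω → Bool := fun ω => decide (∀ k, X k ω = true) with hD
  have hDset : {ω | D ω = true} = ⋂ k, {ω | X k ω = true} := by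
    ext ω; simp [hD]
  have hVmeas : MeasurableSet {ω | D ω = true} := by
    rw [hDset]
    exact MeasurableSet.iInter fun k => (hmeas k) (measurableSet_singleton true)
  have hsub : ∀ k, {ω | D ω = true} ⊆ {ω | X k ω = true} := by
    intro k; rw [hDset]; exact Set.iInter_subset _ k
  have hUm : ∀ k : Fin n, MeasurableSet {ω | X k ω = true} :=
    fun k => (hmeas k) (measurableSet_singleton true)
  rw [mi_eq μ (X i) D (hUm i) hVmeas (hsub i), mi_eq μ (X j) D (hUm j) hVmeas (hsub j)]
  set c := (μ {ω | D ω = true}).toReal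
  set p := (μ {ω | X i ω = true}).toReal with hp
  set q := (μ {ω | X j ω = true}).toReal with hq
  have hc : 0 ≤ c := ENNReal.toReal_nonneg
  have hcp : c ≤ p := ENNReal.toReal_mono (measure_ne_top μ _) (measure_mono (hsub i))
  have hpq : p ≤ q := ENNReal.toReal_mono (measure_ne_top μ _) hij
  have := ent_key hc hcp hpq
  linarith
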